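/- arXiv:2001.08270 — 8 statements merged into one kernel-verified Lean document; each statement's English description precedes it below -/
import Mathlib

section
/- Let G be a group with a T-valued 2-cocycle c, and let η, ξ be commuting elements of G. Then the following are equivalent: (1) c(ξ, η) = c(η, ξ); (2) c(ξη, η⁻¹) = c(η⁻¹, ξη); (3) c(ξ, η⁻¹) = c(η⁻¹, ξ); (4) c(ξη⁻¹, η) = c(η, ξη⁻¹). -/
/-- The four symmetry conditions for a 2-cocycle at commuting elements are equivalent. -/
theorem cocycle_comm_tfae {G : Type*} [Group G] (c : G → G → Circle)
    (hc_right : ∀ g : G, c g 1 = 1) (hc_left : ∀ g : G, c 1 g = 1)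
    (hc : ∀ g h k : G, c g (h * k) * c h k = c (g * h) k * c g h)
    (η ξ : G) (hcomm : ξ * η = η * ξ) :
    [ c ξ η = c η ξ,
      c (ξ * η) η⁻¹ = c η⁻¹ (ξ * η),
      c ξ η⁻¹ = c η⁻¹ ξ,
      c (ξ * η⁻¹) η = c η (ξ * η⁻¹) ].TFAE := by
  have hcomm' : ξ * η⁻¹ = η⁻¹ * ξ := (Commute.inv_right hcomm).eq
  -- c η η⁻¹ = c η⁻¹ η
  have hinv : c η η⁻¹ = c η⁻¹ η := by
    have := hc η η⁻¹ η
    simpa [hc_right, hc_left] using this.symm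
  have hB : c (ξ * η) η⁻¹ = c η η⁻¹ * (c ξ η)⁻¹ := by
    have := hc ξ η η⁻¹
    simp [hc_right] at this
    exact eq_mul_inv_of_mul_eq this.symm
  have hE : c η⁻¹ (ξ * η) = c η⁻¹ η * (c η ξ)⁻¹ := by
    have := hc η⁻¹ η ξ
    rw [← hcomm] at this
    simp [hc_left] at this
    exact eq_mul_inv_of_mul_eq this
  have hA : c (ξ * η⁻¹) η = c η⁻¹ η * (c ξ η⁻¹)⁻¹ := by
    have := hc ξ η⁻¹ η
    simp [hc_right] at this
    exact eq_mul_inv_of_mul_eq this.symm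
  have hF : c η (ξ * η⁻¹) = c η η⁻¹ * (c η⁻¹ ξ)⁻¹ := by
    have := hc η η⁻¹ ξ
    rw [← hcomm'] at this
    simp [hc_left] at this
    exact eq_mul_inv_of_mul_eq this
  have key : (c η ξ)⁻¹ * c ξ η = (c ξ η⁻¹)⁻¹ * c η⁻¹ ξ := by
    have := hc η⁻¹ ξ η
    rw [← hcomm'] at this
    rw [hE, hA] at this
    rw [mul_assoc, mul_assoc] at this
    exact mul_left_cancel this
  tfae_have 1 ↔ 2 := by
    rw [hB, hE, hinv, mul_right_inj, inv_inj, eq_comm]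
  tfae_have 3 ↔ 4 := by
    rw [hA, hF, hinv, mul_right_inj, inv_inj, eq_comm]
  tfae_have 1 ↔ 3 := by
    constructor
    · intro h
      rw [h, inv_mul_cancel] at key
      exact inv_mul_eq_one.mp key.symm
    · intro h
      rw [h, inv_mul_cancel] at key
      exact (inv_mul_eq_one.mp key).symm
  tfae_finish
end

section
/- Let G be a group with a T-valued 2-cocycle c, let S be an abelian subgroup of G on which c is symmetric (i.e., c(s,t) = c(t,s) for all s,t ∈ S), and let η ∈ G commute with some s ∈ S. Then the following are equivalent: (1) c(s, η) = c(η, s); (2) for all t ∈ S, c(s, ηt) = c(ηt, s); (3) there exists t ∈ S with c(s, ηt) = c(ηt, s). -/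
/-- Lemma on equivalent symmetry conditions relative to an abelian subgroup `S`
on which the 2-cocycle `c` is symmetric. -/
theorem cocycle_eta_equivalences {G : Type*} [Group G] (c : G → G → Circle)
    (hc_right : ∀ g : G, c g 1 = 1) (hc_left : ∀ g : G, c 1 g = 1)
    (hc : ∀ g h k : G, c g (h * k) * c h k = c (g * h) k * c g h)
    (S : Subgroup G)
    (hab : ∀ s ∈ S, ∀ t ∈ S, s * t = t * s)
    (hsym : ∀ s ∈ S, ∀ t ∈ S, c s t = c t s)
    (η : G) (s : G) (hs : s ∈ S) (hcomm : η * s = s * η) :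
    [ c s η = c η s,
      ∀ t ∈ S, c s (η * t) = c (η * t) s,
      ∃ t ∈ S, c s (η * t) = c (η * t) s ].TFAE := by
  have key : ∀ t ∈ S, (c s (η * t) = c (η * t) s ↔ c s η = c η s) := by
    intro t ht
    have h1 : c s (η * t) * c η t = c (η * s) t * c s η := by
      have := hc s η t
      rwa [← hcomm] at this
    have h2 : c (η * t) s * c η t = c (η * s) t * c η s := by
      have e2 := hc η t s
      have e3 := hc η s t
      rw [hab t ht s hs] at e2
      rw [hsym s hs t ht] at e3
      exact e2.symm.trans e3
    constructor
    · intro h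
      have : c (η * s) t * c s η = c (η * s) t * c η s := by
        rw [← h1, ← h2, h]
      exact mul_left_cancel this
    · intro h
      have : c s (η * t) * c η t = c (η * t) s * c η t := by
        rw [h1, h2, h]
      exact mul_right_cancel this
  tfae_have 1 → 2 := fun h t ht => (key t ht).2 h
  tfae_have 2 → 3 := fun h => ⟨1, S.one_mem, h 1 S.one_mem⟩
  tfae_have 3 → 1 := fun ⟨t, ht, h⟩ => (key t ht).1 h
  tfae_finish
end

section
/- Let G be a group with a T-valued 2-cocycle c, let S be a subgroup of G that is maximal among abelian subgroups on which c is symmetric, and let u be the identity. If η ∈ G satisfies ηs = sη and c(s, η) = c(η, s) for all s ∈ S, then η ∈ S. -/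
private lemma circle_helper (a b p q r s u P v : ℂ)
    (hq : q ≠ 0) (hs : s ≠ 0) (hb : b ≠ 0) (hu : u ≠ 0) (hr : r ≠ 0) (hP : P ≠ 0)
    (E1 : a * u = P * p) (E2 : v * s = b * u) (E3 : v * r = P * q) :
    a * b⁻¹ = p * q⁻¹ * (r * s⁻¹) := by
  have hA : a = P * p / u := eq_div_of_mul_eq hu E1
  have hV : v = P * q / r := eq_div_of_mul_eq hr E3
  have hB : b = v * s / u := eq_div_of_mul_eq hu E2.symm
  rw [hA, hB, hV]
  field_simp

/-- If `S` is maximal among abelian subgroups of `G` on which the 2-cocycle `c` is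
symmetric, and `η` commutes with all of `S` with `c(s, η) = c(η, s)` for all `s ∈ S`,
then `η ∈ S`. -/
theorem eta_in_S {G : Type*} [Group G] (c : G → G → Circle)
    (hc_right : ∀ g : G, c g 1 = 1) (hc_left : ∀ g : G, c 1 g = 1)
    (hc : ∀ g h k : G, c g (h * k) * c h k = c (g * h) k * c g h)
    (S : Subgroup G)
    (hab : ∀ s ∈ S, ∀ t ∈ S, s * t = t * s)
    (hsym : ∀ s ∈ S, ∀ t ∈ S, c s t = c t s)
    (hmax : ∀ T : Subgroup G, S < T →
      ¬((∀ s ∈ T, ∀ t ∈ T, s * t = t * s) ∧ (∀ s ∈ T, ∀ t ∈ T, c s t = c t s)))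
    (η : G)
    (hcomm : ∀ s ∈ S, η * s = s * η)
    (hcsym : ∀ s ∈ S, c s η = c η s) :
    η ∈ S := by
  by_contra hη
  -- key multiplicativity of the antisymmetrization β(x,y) = c x y * (c y x)⁻¹
  have key : ∀ x y z : G, x * y = y * x → x * z = z * x →
      c x (y * z) * (c (y * z) x)⁻¹ = (c x y * (c y x)⁻¹) * (c x z * (c z x)⁻¹) := by
    intro x y z hxy hxz
    have e1 := hc x y z
    have e2 := hc y z x
    have e3 := hc y x z
    rw [← hxz] at e2
    rw [← hxy] at e3
    have E1 : ((c x (y * z) : Circle) : ℂ) * c y z = (c (x * y) z : Circle) * c x y := by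
      exact_mod_cast congrArg (fun t : Circle => (t : ℂ)) e1
    have E2 : ((c y (x * z) : Circle) : ℂ) * c z x = (c (y * z) x : Circle) * c y z := by
      exact_mod_cast congrArg (fun t : Circle => (t : ℂ)) e2
    have E3 : ((c y (x * z) : Circle) : ℂ) * c x z = (c (x * y) z : Circle) * c y x := by
      exact_mod_cast congrArg (fun t : Circle => (t : ℂ)) e3
    apply Circle.coe_injective
    push_cast
    exact circle_helper _ _ _ _ _ _ _ _ _ (by simp) (by simp) (by simp) (by simp) (by simp) (by simp)
      E1 E2 E3
  -- helper: symmetry of c on a pair from β = 1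
  have beta_one : ∀ x y : G, c x y * (c y x)⁻¹ = 1 → c x y = c y x := by
    intro x y h
    exact mul_inv_eq_one.mp h
  set T : Subgroup G := Subgroup.closure (↑S ∪ {η}) with hT
  have hle : S ≤ T := fun s hs => Subgroup.subset_closure (Or.inl hs)
  have hηT : η ∈ T := Subgroup.subset_closure (Or.inr rfl)
  have hST : S < T := lt_of_le_of_ne hle (fun h => hη (h ▸ hηT))
  have main : ∀ a ∈ T, ∀ b ∈ T, a * b = b * a ∧ c a b = c b a := by
    intro a ha b hb
    induction ha, hb using Subgroup.closure_induction₂ with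
    | mem x y hx hy =>
      rcases hx with hx | hx <;> rcases hy with hy | hy
      · exact ⟨hab x hx y hy, hsym x hx y hy⟩
      · simp only [Set.mem_singleton_iff] at hy; subst hy
        exact ⟨(hcomm x hx).symm, hcsym x hx⟩
      · simp only [Set.mem_singleton_iff] at hx; subst hx
        exact ⟨hcomm y hy, (hcsym y hy).symm⟩
      · simp only [Set.mem_singleton_iff] at hx hy; subst hx; subst hy
        exact ⟨rfl, rfl⟩
    | one_left x hx => simp [hc_left, hc_right]
    | one_right x hx => simp [hc_left, hc_right]
    | mul_left x y z hx hy hz h1 h2 =>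
      obtain ⟨hxz, hcxz⟩ := h1
      obtain ⟨hyz, hcyz⟩ := h2
      have hcomm' : x * y * z = z * (x * y) := by
        rw [mul_assoc, hyz, ← mul_assoc, hxz, mul_assoc]
      refine ⟨hcomm', ?_⟩
      have := key z x y hxz.symm hyz.symm
      rw [← hcxz, ← hcyz] at this
      simp only [mul_inv_cancel, one_mul, mul_one] at this
      exact (beta_one _ _ this).symm
    | mul_right y z x hy hz hx h1 h2 =>
      obtain ⟨hxy, hcxy⟩ := h1
      obtain ⟨hxz, hcxz⟩ := h2
      have hcomm' : x * (y * z) = y * z * x := by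
        rw [← mul_assoc, hxy, mul_assoc, hxz, ← mul_assoc]
      refine ⟨hcomm', ?_⟩
      have := key x y z hxy hxz
      rw [hcxy, hcxz] at this
      simp only [mul_inv_cancel, one_mul, mul_one] at this
      exact beta_one _ _ this
    | inv_left x y hx hy h =>
      obtain ⟨hxy, hcxy⟩ := h
      have hC : Commute x y := hxy
      refine ⟨hC.inv_left, ?_⟩
      have hC2 : y * x⁻¹ = x⁻¹ * y := hC.inv_left.symm
      have := key y x x⁻¹ hxy.symm hC2
      rw [mul_inv_cancel, hc_right, hc_left, ← hcxy] at this
      simp only [mul_inv_cancel, one_mul, inv_one] at this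
      exact (beta_one _ _ this.symm).symm
    | inv_right x y hx hy h =>
      obtain ⟨hxy, hcxy⟩ := h
      have hC : Commute x y := hxy
      refine ⟨hC.inv_right, ?_⟩
      have hC2 : x * y⁻¹ = y⁻¹ * x := hC.inv_right
      have := key x y y⁻¹ hxy hC2
      rw [mul_inv_cancel, hc_right, hc_left, hcxy] at this
      simp only [mul_inv_cancel, one_mul, inv_one] at this
      exact beta_one _ _ this.symm
  exact hmax T hST ⟨fun s hs t ht => (main s hs t ht).1, fun s hs t ht => (main s hs t ht).2⟩
end

section
/- On the group G = ℤ⁵ with multiplication a·b = (a₁+b₁+2a₅b₃, a₂+b₂+2a₅b₄, a₃+b₃, a₄+b₄, a₅+b₅), the function c(a, b) = (−1)^{a₄b₁} is a 2-cocycle: c(a, e) = c(e, a) = 1 and c(a, bc')c(b, c') = c(ab, c')c(a, b) for all a, b, c' ∈ G. -/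
abbrev V : Type := ℤ × ℤ × ℤ × ℤ × ℤ

def gmul (a b : V) : V :=
  (a.1 + b.1 + 2 * a.2.2.2.2 * b.2.2.1,
   a.2.1 + b.2.1 + 2 * a.2.2.2.2 * b.2.2.2.1,
   a.2.2.1 + b.2.2.1,
   a.2.2.2.1 + b.2.2.2.1,
   a.2.2.2.2 + b.2.2.2.2)

def ge : V := (0, 0, 0, 0, 0)

def ginv (a : V) : V :=
  (2 * a.2.2.1 * a.2.2.2.2 - a.1,
   2 * a.2.2.2.1 * a.2.2.2.2 - a.2.1,
   -a.2.2.1, -a.2.2.2.1, -a.2.2.2.2)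

noncomputable def cc (a b : V) : ℂ := (-1 : ℂ) ^ (a.2.2.2.1 * b.1)

/-- `c(a,b) = (-1)^{a₄ b₁}` is a 2-cocycle on the group `ℤ⁵` with the given law. -/
theorem z5_cocycle :
    (∀ a : V, cc a ge = 1 ∧ cc ge a = 1) ∧
    (∀ a b d : V, cc a (gmul b d) * cc b d = cc (gmul a b) d * cc a b) := by
  have key : ∀ m n : ℤ, (-1:ℂ)^(m + 2*n) = (-1:ℂ)^m := by
    intro m n
    rw [zpow_add₀ (by norm_num : (-1:ℂ) ≠ 0), zpow_mul]
    norm_num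
  constructor
  · intro a
    simp [cc, ge]
  · intro a b d
    simp only [cc, gmul]
    rw [← zpow_add₀ (by norm_num : (-1:ℂ) ≠ 0), ← zpow_add₀ (by norm_num : (-1:ℂ) ≠ 0)]
    have : a.2.2.2.1 * (b.1 + d.1 + 2 * b.2.2.2.2 * d.2.2.1) + b.2.2.2.1 * d.1
        = ((a.2.2.2.1 + b.2.2.2.1) * d.1 + a.2.2.2.1 * b.1)
          + 2 * (a.2.2.2.1 * b.2.2.2.2 * d.2.2.1) := by ring
    rw [this, key]
end

section
/- In the group G = ℤ⁵ with multiplication a·b = (a₁+b₁+2a₅b₃, a₂+b₂+2a₅b₄, a₃+b₃, a₄+b₄, a₅+b₅), for any positive integer j and any g ∈ G, g^j = (jg₁ + j(j−1)g₅g₃, jg₂ + j(j−1)g₅g₄, jg₃, jg₄, jg₅). Consequently G has the unique root property: g^j = h^j for some positive integer j implies g = h. -/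
def gpow (g : V) : ℕ → V
  | 0 => ge
  | n + 1 => gmul g (gpow g n)

lemma gpow_formula (j : ℕ) (g : V) :
    gpow g j =
      ((j : ℤ) * g.1 + (j : ℤ) * ((j : ℤ) - 1) * g.2.2.2.2 * g.2.2.1,
       (j : ℤ) * g.2.1 + (j : ℤ) * ((j : ℤ) - 1) * g.2.2.2.2 * g.2.2.2.1,
       (j : ℤ) * g.2.2.1, (j : ℤ) * g.2.2.2.1, (j : ℤ) * g.2.2.2.2) := by
  induction j with
  | zero => simp [gpow, ge]
  | succ n ih =>
    simp only [gpow, ih, gmul]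
    push_cast
    refine Prod.ext ?_ (Prod.ext ?_ (Prod.ext ?_ (Prod.ext ?_ ?_))) <;> simp <;> ring

/-- Powers in the group `ℤ⁵` are given by the stated formula, and consequently the
group has the unique root property. -/
theorem z5_pow_and_unique_root :
    (∀ j : ℕ, 0 < j → ∀ g : V,
      gpow g j =
        ((j : ℤ) * g.1 + (j : ℤ) * ((j : ℤ) - 1) * g.2.2.2.2 * g.2.2.1,
         (j : ℤ) * g.2.1 + (j : ℤ) * ((j : ℤ) - 1) * g.2.2.2.2 * g.2.2.2.1,
         (j : ℤ) * g.2.2.1, (j : ℤ) * g.2.2.2.1, (j : ℤ) * g.2.2.2.2)) ∧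
    (∀ g h : V, ∀ j : ℕ, 0 < j → gpow g j = gpow h j → g = h) := by
  constructor
  · intro j _ g; exact gpow_formula j g
  · intro g h j hj heq
    rw [gpow_formula, gpow_formula] at heq
    obtain ⟨g1, g2, g3, g4, g5⟩ := g
    obtain ⟨h1, h2, h3, h4, h5⟩ := h
    simp only [Prod.mk.injEq] at heq ⊢
    obtain ⟨e1, e2, e3, e4, e5⟩ := heq
    have hj' : (j : ℤ) ≠ 0 := by exact_mod_cast hj.ne'
    have h3' : g3 = h3 := by
      have := mul_left_cancel₀ hj' e3; exact this
    have h4' : g4 = h4 := mul_left_cancel₀ hj' e4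
    have h5' : g5 = h5 := mul_left_cancel₀ hj' e5
    subst h3' h4' h5'
    refine ⟨mul_left_cancel₀ hj' (by linarith), mul_left_cancel₀ hj' (by linarith), rfl, rfl, rfl⟩
end

section
/- In the group G = ℤ⁵ with multiplication a·b = (a₁+b₁+2a₅b₃, a₂+b₂+2a₅b₄, a₃+b₃, a₄+b₄, a₅+b₅), equipped with the 2-cocycle c(a,b) = (−1)^{a₄b₁}, the subgroup S₁ = ℤ×ℤ×ℤ×2ℤ×{0} is maximal among abelian subgroups on which c is symmetric: S₁ is abelian, c is symmetric (indeed trivial) on S₁, and any subgroup strictly containing S₁ either fails to be abelian or has non-symmetric c. -/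
def S1 : Set V := {a | (∃ k : ℤ, a.2.2.2.1 = 2 * k) ∧ a.2.2.2.2 = 0}

def IsSubgrp (T : Set V) : Prop :=
  ge ∈ T ∧ (∀ a ∈ T, ∀ b ∈ T, gmul a b ∈ T) ∧ (∀ a ∈ T, ginv a ∈ T)

lemma neg_one_zpow_even (m : ℤ) : (-1 : ℂ) ^ (2 * m) = 1 := by
  rw [zpow_mul]
  norm_num

/-- `S₁` is maximal among abelian subgroups of `ℤ⁵` on which the 2-cocycle `c` is
symmetric; in fact `c` is trivial on `S₁`. -/
theorem z5_S1_maximal :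
    IsSubgrp S1 ∧
    (∀ s ∈ S1, ∀ t ∈ S1, gmul s t = gmul t s) ∧
    (∀ s ∈ S1, ∀ t ∈ S1, cc s t = 1) ∧
    (∀ T : Set V, IsSubgrp T → S1 ⊆ T → S1 ≠ T →
      ¬(∀ a ∈ T, ∀ b ∈ T, gmul a b = gmul b a) ∨
      ¬(∀ a ∈ T, ∀ b ∈ T, cc a b = cc b a)) := by
  refine ⟨⟨⟨⟨0, rfl⟩, rfl⟩, ?_, ?_⟩, ?_, ?_, ?_⟩
  · rintro a ⟨⟨k, hk⟩, ha5⟩ b ⟨⟨l, hl⟩, hb5⟩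
    exact ⟨⟨k + l, by simp [gmul, hk, hl]; ring⟩, by simp [gmul, ha5, hb5]⟩
  · rintro a ⟨⟨k, hk⟩, ha5⟩
    exact ⟨⟨-k, by simp [ginv, hk]⟩, by simp [ginv, ha5]⟩
  · rintro s ⟨_, hs5⟩ t ⟨_, ht5⟩
    simp [gmul, hs5, ht5]; omega
  · rintro s ⟨⟨k, hk⟩, _⟩ t _
    show (-1 : ℂ) ^ (s.2.2.2.1 * t.1) = 1
    rw [hk, mul_assoc]
    exact neg_one_zpow_even _
  · intro T hT hsub hne
    have : ∃ t ∈ T, t ∉ S1 := by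
      by_contra h
      push_neg at h
      exact hne (Set.Subset.antisymm hsub h)
    obtain ⟨t, htT, htS⟩ := this
    simp only [S1, Set.mem_setOf_eq, not_and_or, not_exists] at htS
    by_cases h5 : t.2.2.2.2 = 0
    · -- t₄ is odd, use c asymmetry with e₁
      rcases htS with h4 | h5'
      · right
        intro hsym
        have he1 : ((1 : ℤ), (0 : ℤ), (0 : ℤ), (0 : ℤ), (0 : ℤ)) ∈ T :=
          hsub ⟨⟨0, rfl⟩, rfl⟩
        have := hsym t htT _ he1
        have hodd : Odd t.2.2.2.1 := by
          rcases Int.even_or_odd t.2.2.2.1 with ⟨k, hk⟩ | h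
          · exact absurd (by omega : t.2.2.2.1 = 2 * k) (h4 k)
          · exact h
        rw [cc, cc] at this
        simp only [mul_one, mul_zero, zero_mul, zpow_zero] at this
        rw [hodd.neg_one_zpow] at this
        norm_num at this
      · exact absurd h5 h5'
    · -- t₅ ≠ 0, non-commutes with e₃
      left
      intro hcomm
      have he3 : ((0 : ℤ), (0 : ℤ), (1 : ℤ), (0 : ℤ), (0 : ℤ)) ∈ T :=
        hsub ⟨⟨0, rfl⟩, rfl⟩
      have := hcomm t htT _ he3
      simp only [gmul, Prod.mk.injEq] at this
      omega
end

section
/- In the group G = ℤ⁵ with multiplication a·b = (a₁+b₁+2a₅b₃, a₂+b₂+2a₅b₄, a₃+b₃, a₄+b₄, a₅+b₅) and 2-cocycle c(a,b) = (−1)^{a₄b₁}, for any g ∈ G and s in the subgroup S₁ = ℤ×ℤ×ℤ×2ℤ×{0}: (conj{c(g,g⁻¹)})·c(g⁻¹, s)·c(g⁻¹s, g) = (−1)^{g₄s₁} = c(g, s). -/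
lemma neg_one_zpow_congr (a b : ℤ) (h : Even (a - b)) :
    (-1 : ℂ) ^ a = (-1 : ℂ) ^ b := by
  have : (-1 : ℂ) ^ a = (-1 : ℂ) ^ (a - b) * (-1 : ℂ) ^ b := by
    rw [← zpow_add₀ (by norm_num : (-1 : ℂ) ≠ 0)]; ring_nf
  rw [this, h.neg_one_zpow, one_mul]

/-- For `g ∈ G` and `s ∈ S₁`:
`conj(c(g,g⁻¹)) c(g⁻¹,s) c(g⁻¹s,g) = (-1)^{g₄ s₁} = c(g,s)`. -/
theorem z5_cocycle_computation (g s : V) (hs : s ∈ S1) :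
    (starRingEnd ℂ) (cc g (ginv g)) * cc (ginv g) s * cc (gmul (ginv g) s) g =
      (-1 : ℂ) ^ (g.2.2.2.1 * s.1) ∧
    (-1 : ℂ) ^ (g.2.2.2.1 * s.1) = cc g s := by
  obtain ⟨⟨k, hk⟩, h5⟩ := hs
  refine ⟨?_, rfl⟩
  simp only [cc, ginv, gmul, map_zpow₀, map_neg, map_one]
  rw [← zpow_add₀ (by norm_num : (-1 : ℂ) ≠ 0), ← zpow_add₀ (by norm_num : (-1 : ℂ) ≠ 0)]
  apply neg_one_zpow_congr
  rw [hk]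
  ring_nf
  exact ⟨g.2.2.1 * g.2.2.2.1 * g.2.2.2.2 - g.1 * g.2.2.2.1 - g.2.2.2.1 * s.1 + g.1 * k, by ring⟩
end

section
/- In the group H = ℤ/4ℤ × ℤ/4ℤ × ℤ × ℤ × ℤ/4ℤ with multiplication (a,b,c,d,e)·(a',b',c',d',e') = (a+a'+2ec', b+b'+2ed', c+c', d+d', e+e'), let ν = (0,0,0,0,1) and μ = (2,0,0,0,1), and let S = ℤ/4ℤ × ℤ/4ℤ × ℤ × 2ℤ × {0,2}. The element ν is 2-centralizing but not 1-centralizing for S: there exists s ∈ S with νs ≠ sν, but νs² = s²ν for all s ∈ S. -/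
abbrev HV : Type := ZMod 4 × ZMod 4 × ℤ × ℤ × ZMod 4

def hmul (a b : HV) : HV :=
  (a.1 + b.1 + 2 * a.2.2.2.2 * (b.2.2.1 : ZMod 4),
   a.2.1 + b.2.1 + 2 * a.2.2.2.2 * (b.2.2.2.1 : ZMod 4),
   a.2.2.1 + b.2.2.1,
   a.2.2.2.1 + b.2.2.2.1,
   a.2.2.2.2 + b.2.2.2.2)

def he : HV := (0, 0, 0, 0, 0)

def hinv (a : HV) : HV :=
  (2 * a.2.2.2.2 * (a.2.2.1 : ZMod 4) - a.1,
   2 * a.2.2.2.2 * (a.2.2.2.1 : ZMod 4) - a.2.1,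
   -a.2.2.1, -a.2.2.2.1, -a.2.2.2.2)

noncomputable def sigma (a b : HV) : ℂ :=
  (-1 : ℂ) ^ (a.2.2.2.1 * ((b.1.val : ℤ)))

def SH : Set HV :=
  {a | (∃ k : ℤ, a.2.2.2.1 = 2 * k) ∧ (a.2.2.2.2 = 0 ∨ a.2.2.2.2 = 2)}

def nu : HV := (0, 0, 0, 0, 1)

/-- `ν = (0,0,0,0,1)` is 2-centralizing but not 1-centralizing for `S`. -/
theorem nu_two_centralizing_not_one :
    (∃ s ∈ SH, hmul nu s ≠ hmul s nu) ∧
    (∀ s ∈ SH, hmul nu (hmul s s) = hmul (hmul s s) nu) := by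
  constructor
  · refine ⟨(0, 0, 1, 0, 0), ⟨⟨0, by norm_num⟩, Or.inl rfl⟩, ?_⟩
    intro h
    have h1 := congrArg Prod.fst h
    simp [hmul, nu] at h1
    exact absurd h1 (by decide)
  · rintro ⟨a, b, c, d, e⟩ -
    simp only [hmul, nu, Prod.mk.injEq]
    refine ⟨?_, ?_, by ring, by ring, by ring⟩ <;>
    · push_cast
      ring_nf
      simp [show ((4 : ℤ) : ZMod 4) = 0 from rfl]
      ring_nf
      constructor <;> ring
end
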